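/- Let s ∈ (0,1), α ∈ (0,1), c > 0, and fix ε > 0. For d > 1/2 define f(d) := (2/s)[ 2 d^{−s} − (d − 1/2)^{−s} − (d + 1/2)^{−s} ] + (c ε/(1−α))[ 2 d^{1−α} − (d − 1/2)^{1−α} − (d + 1/2)^{1−α} ]. Then lim_{d→+∞} d^{1+α} f(d) = c α ε / 4. In particular, there exists D = D(s, α, c, ε) > 1/2 such that f(d) > 0 for all d ≥ D. -/

import Mathlib

open Set Filter Topology

noncomputable section

/-- The function `f(d) = ζ_E(1/2) - ζ_E(0)` computed explicitly for
`E = (0,1/2) ∪ (d,d+1/2)`. -/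
def fEL (s α c ε d : ℝ) : ℝ :=
  (2 / s) * (2 * d ^ (-s) - (d - 1 / 2) ^ (-s) - (d + 1 / 2) ^ (-s))
    + (c * ε / (1 - α)) *
        (2 * d ^ (1 - α) - (d - 1 / 2) ^ (1 - α) - (d + 1 / 2) ^ (1 - α))

/-- Key limit: second difference quotient of `t ↦ (1±t/2)^p` at `0`. -/
lemma keyA (p : ℝ) :
    Tendsto (fun t : ℝ => (2 - (1 - t/2) ^ p - (1 + t/2) ^ p) / t ^ 2)
      (𝓝[>] (0:ℝ)) (𝓝 (-(p * (p - 1)) / 4)) := by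
  set f₁ : ℝ → ℝ := fun t => 2 - (1 - t/2) ^ p - (1 + t/2) ^ p with hf₁
  set f₂ : ℝ → ℝ := fun t => (p/2) * (1 - t/2) ^ (p-1) - (p/2) * (1 + t/2) ^ (p-1) with hf₂
  set f₃ : ℝ → ℝ := fun t => -(p*(p-1)/4) * ((1 - t/2) ^ (p-2) + (1 + t/2) ^ (p-2)) with hf₃
  have hmem : ∀ x ∈ Ioo (0:ℝ) 1, (0:ℝ) < 1 - x/2 ∧ (0:ℝ) < 1 + x/2 := by
    intro x hx; constructor <;> [linarith [hx.2]; linarith [hx.1]]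
  have hminus : ∀ x : ℝ, HasDerivAt (fun t : ℝ => 1 - t/2) (-(1/2)) x := by
    intro x; simpa using ((hasDerivAt_id x).div_const 2).const_sub 1
  have hplus : ∀ x : ℝ, HasDerivAt (fun t : ℝ => 1 + t/2) (1/2) x := by
    intro x; simpa using ((hasDerivAt_id x).div_const 2).const_add 1
  have hd1 : ∀ x ∈ Ioo (0:ℝ) 1, HasDerivAt f₁ (f₂ x) x := by
    intro x hx
    obtain ⟨h1, h2⟩ := hmem x hx
    have A := (hminus x).rpow_const (p := p) (Or.inl h1.ne')
    have B := (hplus x).rpow_const (p := p) (Or.inl h2.ne')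
    have := (A.const_sub 2).sub B
    convert this using 1
    · rfl
    · rfl
    · rfl
    simp only [hf₂]; ring
  have hd2 : ∀ x ∈ Ioo (0:ℝ) 1, HasDerivAt f₂ (f₃ x) x := by
    intro x hx
    obtain ⟨h1, h2⟩ := hmem x hx
    have A := ((hminus x).rpow_const (p := p-1) (Or.inl h1.ne')).const_mul (p/2)
    have B := ((hplus x).rpow_const (p := p-1) (Or.inl h2.ne')).const_mul (p/2)
    have := A.sub B
    convert this using 1
    · rfl
    · rfl
    · rfl
    simp only [hf₃]
    have e : p - 1 - 1 = p - 2 := by ring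
    rw [e]; ring
  have hg1 : ∀ x ∈ Ioo (0:ℝ) 1, HasDerivAt (fun t : ℝ => t ^ 2) (2 * x) x := by
    intro x _; simpa using hasDerivAt_pow 2 x
  have hg2 : ∀ x ∈ Ioo (0:ℝ) 1, HasDerivAt (fun t : ℝ => 2 * t) (2:ℝ) x := by
    intro x _; simpa using (hasDerivAt_id x).const_mul (2:ℝ)
  -- continuity facts at 0
  have cminus : ∀ q : ℝ, ContinuousAt (fun t : ℝ => (1 - t/2) ^ q) 0 := by
    intro q
    exact (ContinuousAt.rpow_const (by fun_prop) (by norm_num))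
  have cplus : ∀ q : ℝ, ContinuousAt (fun t : ℝ => (1 + t/2) ^ q) 0 := by
    intro q
    exact (ContinuousAt.rpow_const (by fun_prop) (by norm_num))
  -- second L'Hôpital
  have lim2 : Tendsto (fun x => f₂ x / (2 * x)) (𝓝[>] (0:ℝ)) (𝓝 (-(p * (p - 1)) / 4)) := by
    apply HasDerivAt.lhopital_zero_right_on_Ioo one_pos hd2 hg2 (fun x _ => two_ne_zero)
    · have : ContinuousAt f₂ 0 := by
        exact ((cminus (p-1)).const_smul (p/2)).sub ((cplus (p-1)).const_smul (p/2))
      have h0 : f₂ 0 = 0 := by norm_num [hf₂]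
      have h := tendsto_nhdsWithin_of_tendsto_nhds (s := Ioi (0:ℝ)) this.tendsto
      rwa [h0] at h
    · have : Tendsto (fun t : ℝ => 2 * t) (𝓝 (0:ℝ)) (𝓝 0) := by
        have h2 : Tendsto (fun t : ℝ => 2 * t) (𝓝 (0:ℝ)) (𝓝 (2 * 0)) :=
          (continuous_const.mul continuous_id).tendsto (0:ℝ)
        simpa using h2
      exact tendsto_nhdsWithin_of_tendsto_nhds this
    · have hcont : ContinuousAt (fun x => f₃ x / 2) 0 := by
        exact (((cminus (p-2)).add (cplus (p-2))).const_smul (-(p*(p-1)/4))).div_const 2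
      have h0 : f₃ 0 / 2 = -(p * (p - 1)) / 4 := by norm_num [hf₃]; ring
      have h := tendsto_nhdsWithin_of_tendsto_nhds (s := Ioi (0:ℝ)) hcont.tendsto
      rwa [h0] at h
  -- first L'Hôpital
  apply HasDerivAt.lhopital_zero_right_on_Ioo one_pos hd1 hg1
    (fun x hx => by have := hx.1; positivity)
  · have : ContinuousAt f₁ 0 := by
      exact (continuousAt_const.sub (cminus p)).sub (cplus p)
    have h0 : f₁ 0 = 0 := by norm_num [hf₁]
    have h := tendsto_nhdsWithin_of_tendsto_nhds (s := Ioi (0:ℝ)) this.tendsto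
    rwa [h0] at h
  · exact tendsto_nhdsWithin_of_tendsto_nhds (by simpa using (continuous_pow 2).tendsto (0:ℝ))
  · exact lim2

/-- Change of variables `t = d⁻¹` in `keyA`. -/
lemma keyB (p : ℝ) :
    Tendsto (fun d : ℝ => d ^ (2 - p) * (2 * d ^ p - (d - 1/2) ^ p - (d + 1/2) ^ p))
      atTop (𝓝 (-(p * (p - 1)) / 4)) := by
  have hcomp : Tendsto (fun d : ℝ => d⁻¹) atTop (𝓝[>] (0:ℝ)) := by
    apply tendsto_nhdsWithin_of_tendsto_nhds_of_eventually_within _ tendsto_inv_atTop_zero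
    filter_upwards [eventually_gt_atTop (0:ℝ)] with d hd using inv_pos.mpr hd
  have H := (keyA p).comp hcomp
  apply H.congr'
  filter_upwards [eventually_ge_atTop (1:ℝ)] with d hd
  have hd0 : (0:ℝ) < d := lt_of_lt_of_le one_pos hd
  have ht1 : d⁻¹ ≤ 1 := inv_le_one_of_one_le₀ hd
  have ht0 : 0 < d⁻¹ := inv_pos.mpr hd0
  have hA : (0:ℝ) ≤ 1 - d⁻¹/2 := by linarith
  have hB : (0:ℝ) ≤ 1 + d⁻¹/2 := by linarith
  have h1 : d - 1/2 = d * (1 - d⁻¹/2) := by field_simp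
  have h2 : d + 1/2 = d * (1 + d⁻¹/2) := by field_simp
  simp only [Function.comp]
  rw [h1, h2, Real.mul_rpow hd0.le hA, Real.mul_rpow hd0.le hB]
  have hdd : d ^ (2 - p) * d ^ p = d ^ (2:ℕ) := by
    rw [← Real.rpow_natCast d 2, ← Real.rpow_add hd0]; norm_num
  have hrhs : d ^ (2 - p) * (2 * d ^ p - d ^ p * (1 - d⁻¹/2) ^ p - d ^ p * (1 + d⁻¹/2) ^ p)
      = (d ^ (2 - p) * d ^ p) * (2 - (1 - d⁻¹/2) ^ p - (1 + d⁻¹/2) ^ p) := by ring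
  rw [hrhs, hdd]
  rw [div_eq_iff (by positivity : (d⁻¹:ℝ) ^ 2 ≠ 0)]
  rw [inv_pow]
  field_simp

/-- One has `lim_{d→∞} d^{1+α} f(d) = cαε/4`; in particular `f(d) > 0`
for all sufficiently large `d`. -/
theorem stmt14 (s α c ε : ℝ) (hs : s ∈ Ioo (0 : ℝ) 1) (hα : α ∈ Ioo (0 : ℝ) 1)
    (hc : 0 < c) (hε : 0 < ε) :
    Tendsto (fun d : ℝ => d ^ (1 + α) * fEL s α c ε d) atTop (𝓝 (c * α * ε / 4)) ∧
    ∃ D : ℝ, 1 / 2 < D ∧ ∀ d : ℝ, D ≤ d → 0 < fEL s α c ε d := by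
  obtain ⟨hs0, hs1⟩ := hs
  obtain ⟨hα0, hα1⟩ := hα
  have hY : Tendsto (fun d : ℝ => d ^ (1 + α) *
      (2 * d ^ (1 - α) - (d - 1/2) ^ (1 - α) - (d + 1/2) ^ (1 - α)))
      atTop (𝓝 (α * (1 - α) / 4)) := by
    have hY0 := keyB (1 - α)
    have e : (2:ℝ) - (1 - α) = 1 + α := by ring
    have ev : -((1 - α) * (1 - α - 1)) / 4 = α * (1 - α) / 4 := by ring
    rw [e, ev] at hY0
    exact hY0
  have hX0 : Tendsto (fun d : ℝ => d ^ (1 + α) *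
      (2 * d ^ (-s) - (d - 1/2) ^ (-s) - (d + 1/2) ^ (-s))) atTop (𝓝 0) := by
    have hz : Tendsto (fun d : ℝ => d ^ (α - 1 - s)) atTop (𝓝 0) := by
      have h := tendsto_rpow_neg_atTop (show (0:ℝ) < 1 + s - α by linarith)
      have e : -(1 + s - α) = α - 1 - s := by ring
      rwa [e] at h
    have hmul := hz.mul (keyB (-s))
    rw [zero_mul] at hmul
    apply hmul.congr'
    filter_upwards [eventually_gt_atTop (0:ℝ)] with d hd
    rw [← mul_assoc, ← Real.rpow_add hd]
    have e : α - 1 - s + (2 - -s) = 1 + α := by ring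
    rw [e]
  have hsum := (hX0.const_mul (2/s)).add (hY.const_mul (c * ε / (1 - α)))
  have hval : 2 / s * 0 + c * ε / (1 - α) * (α * (1 - α) / 4) = c * α * ε / 4 := by
    have hne : (1:ℝ) - α ≠ 0 := by linarith
    rw [mul_zero, zero_add]
    field_simp
  rw [hval] at hsum
  have hmain : Tendsto (fun d : ℝ => d ^ (1 + α) * fEL s α c ε d) atTop
      (𝓝 (c * α * ε / 4)) := by
    apply hsum.congr
    intro d
    simp only [fEL]
    ring
  refine ⟨hmain, ?_⟩
  have hpos : 0 < c * α * ε / 4 := by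
    have := mul_pos (mul_pos hc hα0) hε
    linarith
  have hev : ∀ᶠ d : ℝ in atTop, 0 < d ^ (1 + α) * fEL s α c ε d :=
    hmain.eventually (eventually_gt_nhds hpos)
  have hev2 : ∀ᶠ d : ℝ in atTop, 0 < fEL s α c ε d := by
    filter_upwards [hev, eventually_gt_atTop (0:ℝ)] with d h1 h2
    have h3 : 0 < d ^ (1 + α) := Real.rpow_pos_of_pos h2 _
    nlinarith
  rw [eventually_atTop] at hev2
  obtain ⟨a, ha⟩ := hev2
  refine ⟨max a 1, lt_of_lt_of_le (by norm_num) (le_max_right a 1), fun d hd => ?_⟩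
  exact ha d (le_trans (le_max_left a 1) hd)
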